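/- arXiv:1608.04459 — 3 statements merged into one kernel-verified Lean document; each statement's English description precedes it below -/
import Mathlib

section
/- Let D be a doubly stochastic d×d matrix and q a probability vector with strictly positive entries. If p = D q satisfies p_i = q_{π(i)} for all i for some permutation π, and all entries of q are distinct, then D is the permutation matrix of π, i.e. D_{ij} = δ_{j,π(i)}. -/
def DoublyStochastic {d : ℕ} (D : Matrix (Fin d) (Fin d) ℝ) : Prop :=
  (∀ i j, 0 ≤ D i j) ∧ (∀ i, ∑ j, D i j = 1) ∧ (∀ j, ∑ i, D i j = 1)

def IsProbVector {ι : Type*} [Fintype ι] (p : ι → ℝ) : Prop :=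
  (∀ i, 0 ≤ p i) ∧ ∑ i, p i = 1

theorem doubly_stochastic_permuting_distinct_is_permutation {d : ℕ}
    (D : Matrix (Fin d) (Fin d) ℝ) (hD : DoublyStochastic D)
    (q : Fin d → ℝ) (hq : IsProbVector q) (hqpos : ∀ i, 0 < q i)
    (hdist : Function.Injective q) (π : Equiv.Perm (Fin d))
    (hperm : ∀ i, ∑ j, D i j * q j = q (π i)) :
    ∀ i j, D i j = if j = π i then 1 else 0 := by
  obtain ⟨hpos, hrow, hcol⟩ := hD
  have key : ∀ i j, D i j * (q j - q (π i)) ^ 2 = 0 := by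
    have expand : ∀ i, ∑ j, D i j * (q j - q (π i)) ^ 2
        = (∑ j, D i j * (q j) ^ 2) - (q (π i)) ^ 2 := by
      intro i
      have e : ∀ j, D i j * (q j - q (π i)) ^ 2
          = D i j * (q j) ^ 2 - 2 * q (π i) * (D i j * q j) + (q (π i)) ^ 2 * D i j := by
        intro j; ring
      rw [Finset.sum_congr rfl (fun j _ => e j)]
      rw [Finset.sum_add_distrib, Finset.sum_sub_distrib, ← Finset.mul_sum, ← Finset.mul_sum,
        hperm i, hrow i]
      ring
    have h1 : ∑ i, ∑ j, D i j * (q j - q (π i)) ^ 2 = 0 := by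
      rw [Finset.sum_congr rfl (fun i _ => expand i), Finset.sum_sub_distrib]
      have h2 : ∑ i, ∑ j, D i j * (q j) ^ 2 = ∑ j, (q j) ^ 2 := by
        rw [Finset.sum_comm]
        have : ∀ j : Fin d, ∑ i, D i j * (q j) ^ 2 = (q j) ^ 2 := by
          intro j
          rw [← Finset.sum_mul, hcol j, one_mul]
        rw [Finset.sum_congr rfl (fun j _ => this j)]
      have h3 : ∑ i, (q (π i)) ^ 2 = ∑ j, (q j) ^ 2 :=
        Equiv.sum_comp π (fun j => (q j) ^ 2)
      rw [h2, h3, sub_self]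
    intro i j
    have hnn : ∀ i ∈ (Finset.univ : Finset (Fin d)),
        0 ≤ ∑ j, D i j * (q j - q (π i)) ^ 2 := by
      intro i _
      exact Finset.sum_nonneg fun j _ => mul_nonneg (hpos i j) (sq_nonneg _)
    have hi0 : ∑ j, D i j * (q j - q (π i)) ^ 2 = 0 :=
      (Finset.sum_eq_zero_iff_of_nonneg hnn).mp h1 i (Finset.mem_univ i)
    have hnn2 : ∀ j ∈ (Finset.univ : Finset (Fin d)),
        0 ≤ D i j * (q j - q (π i)) ^ 2 :=
      fun j _ => mul_nonneg (hpos i j) (sq_nonneg _)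
    exact (Finset.sum_eq_zero_iff_of_nonneg hnn2).mp hi0 j (Finset.mem_univ j)
  have zero_off : ∀ i j, j ≠ π i → D i j = 0 := by
    intro i j hj
    rcases mul_eq_zero.mp (key i j) with h0 | h0
    · exact h0
    · have : q j = q (π i) := by
        have := pow_eq_zero_iff (n := 2) (by norm_num) |>.mp h0
        linarith [sub_eq_zero.mp this]
      exact absurd (hdist this) hj
  intro i j
  by_cases h : j = π i
  · subst h
    have hs := hrow i
    rw [Finset.sum_eq_single (π i)] at hs
    · simp [hs]
    · intro b _ hb; exact zero_off i b hb
    · intro hmem; exact absurd (Finset.mem_univ _) hmem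
  · simp only [h, if_false]
    exact zero_off i j h
end

section
/- Classical Landauer equality: with system distribution p_S, environment initially in the Gibbs state g_β for energies E_i at inverse temperature β = 1/(k_B T), and a joint distribution r' on S×E with environment marginal p'_E, the energy change satisfies ⟨H_E⟩' − ⟨H_E⟩ = k_B T [ S(p_S) − S(p'_S) + I(S:E)_{r'} + D(p'_E ‖ g_β) ], provided the joint evolution preserves total Shannon entropy: H(r') = H(p_S) + H(g_β). Consequently ⟨H_E⟩' − ⟨H_E⟩ ≥ k_B T [S(p_S) − S(p'_S)]. -/
noncomputable def shannonEntropy {ι : Type*} [Fintype ι] (p : ι → ℝ) : ℝ :=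
  ∑ i, Real.negMulLog (p i)

noncomputable def klDiv {ι : Type*} [Fintype ι] (p q : ι → ℝ) : ℝ :=
  ∑ i, p i * (Real.log (p i) - Real.log (q i))

lemma key_log_ineq (p q : ℝ) (hp : 0 ≤ p) (hq : 0 < q) :
    p - q ≤ p * (Real.log p - Real.log q) := by
  rcases hp.eq_or_lt with h | h
  · simp [← h]; linarith
  · have h1 : Real.log (q / p) ≤ q / p - 1 := Real.log_le_sub_one_of_pos (div_pos hq h)
    rw [Real.log_div hq.ne' h.ne'] at h1
    have h2 : p * (Real.log q - Real.log p) ≤ p * (q / p - 1) :=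
      (mul_le_mul_iff_right₀ h).mpr h1
    have h3 : p * (q / p - 1) = q - p := by field_simp
    nlinarith

theorem landauer_equality {m n : ℕ} (kB T : ℝ) (hkB : 0 < kB) (hT : 0 < T)
    (E : Fin n → ℝ) (β : ℝ) (hβ : β = 1 / (kB * T))
    (g : Fin n → ℝ)
    (hg : g = fun i => Real.exp (-β * E i) / ∑ j, Real.exp (-β * E j))
    (pS : Fin m → ℝ) (hpS : IsProbVector pS)
    (r' : Fin m × Fin n → ℝ) (hr'0 : ∀ x, 0 ≤ r' x) (hr'1 : ∑ x, r' x = 1)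
    (p'S : Fin m → ℝ) (hp'S : p'S = fun i => ∑ j, r' (i, j))
    (p'E : Fin n → ℝ) (hp'E : p'E = fun j => ∑ i, r' (i, j))
    (hp'Epos : ∀ j, 0 < p'E j)
    (hcons : shannonEntropy r' = shannonEntropy pS + shannonEntropy g) :
    (∑ i, E i * p'E i) - (∑ i, E i * g i) =
        kB * T * (shannonEntropy pS - shannonEntropy p'S +
          (shannonEntropy p'S + shannonEntropy p'E - shannonEntropy r') +
          klDiv p'E g) ∧
    (∑ i, E i * p'E i) - (∑ i, E i * g i) ≥
        kB * T * (shannonEntropy pS - shannonEntropy p'S) := by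
  have hkT : (0:ℝ) < kB * T := mul_pos hkB hT
  -- n > 0
  have hn : 0 < n := by
    by_contra h
    push_neg at h
    interval_cases n
    simp [Fintype.sum_prod_type] at hr'1
  haveI : NeZero n := ⟨hn.ne'⟩
  set Z : ℝ := ∑ j, Real.exp (-β * E j) with hZdef
  have hZ : 0 < Z := Finset.sum_pos (fun j _ => Real.exp_pos _) ⟨⟨0, hn⟩, Finset.mem_univ _⟩
  have hgpos : ∀ i, 0 < g i := by
    intro i; rw [hg]; exact div_pos (Real.exp_pos _) hZ
  have hlogg : ∀ i, Real.log (g i) = -β * E i - Real.log Z := by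
    intro i
    rw [hg]
    simp only
    rw [Real.log_div (Real.exp_ne_zero _) hZ.ne', Real.log_exp]
  have hsumg : ∑ i, g i = 1 := by
    rw [hg]
    rw [← Finset.sum_div]
    exact div_self hZ.ne'
  have hsum_p'E : ∑ j, p'E j = 1 := by
    rw [hp'E, ← Fintype.sum_prod_type_right, hr'1]
  have hsum_p'S : ∑ i, p'S i = 1 := by
    rw [hp'S, ← Fintype.sum_prod_type, hr'1]
  have hp'Snn : ∀ i, 0 ≤ p'S i := by
    intro i; rw [hp'S]
    exact Finset.sum_nonneg (fun j _ => hr'0 _)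
  -- klDiv identity
  have hD : klDiv p'E g = -(shannonEntropy p'E) + β * (∑ i, E i * p'E i) + Real.log Z := by
    unfold klDiv shannonEntropy
    have : ∀ i, p'E i * (Real.log (p'E i) - Real.log (g i)) =
        -Real.negMulLog (p'E i) + β * (E i * p'E i) + Real.log Z * p'E i := by
      intro i
      rw [hlogg, Real.negMulLog]
      ring
    rw [Finset.sum_congr rfl (fun i _ => this i)]
    rw [Finset.sum_add_distrib, Finset.sum_add_distrib, ← Finset.mul_sum, ← Finset.mul_sum,
      hsum_p'E, Finset.sum_neg_distrib]
    ring
  -- Gibbs entropy identity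
  have hSg : shannonEntropy g = β * (∑ i, E i * g i) + Real.log Z := by
    unfold shannonEntropy
    have : ∀ i, Real.negMulLog (g i) = β * (E i * g i) + Real.log Z * g i := by
      intro i
      rw [Real.negMulLog, hlogg]
      ring
    rw [Finset.sum_congr rfl (fun i _ => this i)]
    rw [Finset.sum_add_distrib, ← Finset.mul_sum, ← Finset.mul_sum, hsumg]
    ring
  -- Equality part
  have heq : (∑ i, E i * p'E i) - (∑ i, E i * g i) =
      kB * T * (shannonEntropy pS - shannonEntropy p'S +
        (shannonEntropy p'S + shannonEntropy p'E - shannonEntropy r') +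
        klDiv p'E g) := by
    rw [hcons, hD, hSg, hβ]
    field_simp
    ring
  refine ⟨heq, ?_⟩
  -- Mutual information nonneg
  have hI : 0 ≤ shannonEntropy p'S + shannonEntropy p'E - shannonEntropy r' := by
    have e1 : shannonEntropy p'S = -∑ x : Fin m × Fin n, r' x * Real.log (p'S x.1) := by
      unfold shannonEntropy
      rw [Fintype.sum_prod_type, ← Finset.sum_neg_distrib]
      refine Finset.sum_congr rfl (fun i _ => ?_)
      rw [Real.negMulLog, ← Finset.sum_neg_distrib]
      rw [show -p'S i * Real.log (p'S i) = -((∑ j, r' (i, j)) * Real.log (p'S i)) by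
        rw [hp'S]; ring]
      rw [Finset.sum_mul, Finset.sum_neg_distrib]
    have e2 : shannonEntropy p'E = -∑ x : Fin m × Fin n, r' x * Real.log (p'E x.2) := by
      unfold shannonEntropy
      rw [Fintype.sum_prod_type_right, ← Finset.sum_neg_distrib]
      refine Finset.sum_congr rfl (fun j _ => ?_)
      rw [Real.negMulLog, ← Finset.sum_neg_distrib]
      rw [show -p'E j * Real.log (p'E j) = -((∑ i, r' (i, j)) * Real.log (p'E j)) by
        rw [hp'E]; ring]
      rw [Finset.sum_mul, Finset.sum_neg_distrib]
    have e3 : shannonEntropy r' = -∑ x : Fin m × Fin n, r' x * Real.log (r' x) := by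
      unfold shannonEntropy
      rw [← Finset.sum_neg_distrib]
      exact Finset.sum_congr rfl (fun x _ => by rw [Real.negMulLog]; ring)
    have hsum : shannonEntropy p'S + shannonEntropy p'E - shannonEntropy r' =
        ∑ x : Fin m × Fin n,
          (r' x * Real.log (r' x) - r' x * Real.log (p'S x.1) - r' x * Real.log (p'E x.2)) := by
      rw [e1, e2, e3]
      rw [Finset.sum_sub_distrib, Finset.sum_sub_distrib]
      ring
    rw [hsum]
    have hbound : ∀ x : Fin m × Fin n,
        r' x - p'S x.1 * p'E x.2 ≤
          r' x * Real.log (r' x) - r' x * Real.log (p'S x.1) - r' x * Real.log (p'E x.2) := by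
      intro x
      rcases (hr'0 x).eq_or_lt with h | h
      · have h0 : (0:ℝ) ≤ p'S x.1 * p'E x.2 := mul_nonneg (hp'Snn _) (hp'Epos _).le
        rw [← h]
        simp
        linarith
      · have hpS1 : 0 < p'S x.1 := by
          rw [hp'S]
          exact Finset.sum_pos' (fun j _ => hr'0 _) ⟨x.2, Finset.mem_univ _, h⟩
        have hq : 0 < p'S x.1 * p'E x.2 := mul_pos hpS1 (hp'Epos x.2)
        have := key_log_ineq (r' x) (p'S x.1 * p'E x.2) (hr'0 x) hq
        rw [Real.log_mul hpS1.ne' (hp'Epos x.2).ne'] at this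
        linarith [this]
    calc (0:ℝ) = ∑ x : Fin m × Fin n, (r' x - p'S x.1 * p'E x.2) := by
          rw [Finset.sum_sub_distrib, hr'1]
          have : ∑ x : Fin m × Fin n, p'S x.1 * p'E x.2 = 1 := by
            rw [Fintype.sum_prod_type]
            simp_rw [← Finset.mul_sum, hsum_p'E]
            simpa using hsum_p'S
          rw [this]
          ring
      _ ≤ _ := Finset.sum_le_sum (fun x _ => hbound x)
  -- KL divergence nonneg
  have hDnn : 0 ≤ klDiv p'E g := by
    unfold klDiv
    calc (0:ℝ) = ∑ i, (p'E i - g i) := by rw [Finset.sum_sub_distrib, hsum_p'E, hsumg]; ring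
      _ ≤ _ := Finset.sum_le_sum (fun i _ => key_log_ineq (p'E i) (g i) (hp'Epos i).le (hgpos i))
  nlinarith [mul_nonneg hkT.le (add_nonneg hI hDnn)]
end

section
/- Second law lemma (classical version): if r = p ⊗ q is a product distribution on I × J and r' is obtained from r by a bijection (permutation) of I × J, then the marginals p', q' of r' satisfy H(p') + H(q') ≥ H(p) + H(q). -/
open Real in
lemma subadditivity_aux {m n : ℕ} (r : Fin m × Fin n → ℝ)
    (hr : ∀ x, 0 ≤ r x) (hsum : ∑ x, r x = 1) :
    ∑ x, Real.negMulLog (r x) ≤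
      ∑ i, Real.negMulLog (∑ j, r (i, j)) + ∑ j, Real.negMulLog (∑ i, r (i, j)) := by
  set a : Fin m → ℝ := fun i => ∑ j, r (i, j) with ha
  set b : Fin n → ℝ := fun j => ∑ i, r (i, j) with hb
  have hsum' : ∑ i, ∑ j, r (i, j) = 1 := by
    rw [← hsum, ← Fintype.sum_prod_type]
  have hsa : ∑ i, a i = 1 := hsum'
  have hsb : ∑ j, b j = 1 := by
    rw [← hsum', Finset.sum_comm]
  have ha_nonneg : ∀ i, 0 ≤ a i := fun i => Finset.sum_nonneg fun j _ => hr (i, j)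
  have hb_nonneg : ∀ j, 0 ≤ b j := fun j => Finset.sum_nonneg fun i _ => hr (i, j)
  -- rewrite entropies of marginals as double sums
  have hA : ∑ i, Real.negMulLog (a i) = ∑ i, ∑ j, (- r (i, j) * Real.log (a i)) := by
    refine Finset.sum_congr rfl fun i _ => ?_
    rw [Real.negMulLog, ← Finset.sum_mul]
    simp [Finset.sum_neg_distrib]
    exact Or.inl rfl
  have hB : ∑ j, Real.negMulLog (b j) = ∑ i, ∑ j, (- r (i, j) * Real.log (b j)) := by
    rw [Finset.sum_comm]
    refine Finset.sum_congr rfl fun j _ => ?_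
    rw [Real.negMulLog, ← Finset.sum_mul]
    simp [Finset.sum_neg_distrib]
    exact Or.inl rfl
  have key : ∀ i j, Real.negMulLog (r (i, j)) - (- r (i, j) * Real.log (a i))
      - (- r (i, j) * Real.log (b j)) ≤ a i * b j - r (i, j) := by
    intro i j
    rcases eq_or_lt_of_le (hr (i, j)) with h0 | h0
    · rw [← h0]
      simp [Real.negMulLog, mul_nonneg (ha_nonneg i) (hb_nonneg j)]
    · have hai : 0 < a i := lt_of_lt_of_le h0 (Finset.single_le_sum
        (fun j _ => hr (i, j)) (Finset.mem_univ j))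
      have hbj : 0 < b j := lt_of_lt_of_le h0 (Finset.single_le_sum
        (fun i _ => hr (i, j)) (Finset.mem_univ i))
      have hlog : Real.log (a i * b j / r (i, j)) ≤ a i * b j / r (i, j) - 1 :=
        Real.log_le_sub_one_of_pos (by positivity)
      have : r (i, j) * Real.log (a i * b j / r (i, j)) ≤ a i * b j - r (i, j) := by
        calc r (i, j) * Real.log (a i * b j / r (i, j))
            ≤ r (i, j) * (a i * b j / r (i, j) - 1) := by
              exact mul_le_mul_of_nonneg_left hlog (le_of_lt h0)
          _ = a i * b j - r (i, j) := by field_simp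
      rw [Real.log_div (by positivity) (ne_of_gt h0), Real.log_mul
        (ne_of_gt hai) (ne_of_gt hbj)] at this
      rw [Real.negMulLog]
      nlinarith [this]
  have hle : ∑ x : Fin m × Fin n, Real.negMulLog (r x)
      - (∑ i, Real.negMulLog (a i) + ∑ j, Real.negMulLog (b j)) ≤ 0 := by
    rw [hA, hB, Fintype.sum_prod_type]
    have : ∑ i, ∑ j, (Real.negMulLog (r (i, j)) - (- r (i, j) * Real.log (a i))
        - (- r (i, j) * Real.log (b j))) ≤ ∑ i, ∑ j, (a i * b j - r (i, j)) :=
      Finset.sum_le_sum fun i _ => Finset.sum_le_sum fun j _ => key i j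
    have hrhs : ∑ i, ∑ j, (a i * b j - r (i, j)) = 0 := by
      simp only [Finset.sum_sub_distrib, ← Finset.mul_sum, ← Finset.sum_mul, hsb, hsum']
      simp [hsa]
    simp only [Finset.sum_sub_distrib] at this hrhs ⊢
    linarith
  linarith [hle]

theorem second_law_lemma {m n : ℕ} (p : Fin m → ℝ) (q : Fin n → ℝ)
    (hp : IsProbVector p) (hq : IsProbVector q)
    (σ : Equiv.Perm (Fin m × Fin n))
    (r' : Fin m × Fin n → ℝ) (hr' : r' = fun x => p (σ x).1 * q (σ x).2) :
    shannonEntropy p + shannonEntropy q ≤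
      shannonEntropy (fun i : Fin m => ∑ j, r' (i, j)) +
        shannonEntropy (fun j : Fin n => ∑ i, r' (i, j)) := by
  obtain ⟨hp0, hp1⟩ := hp
  obtain ⟨hq0, hq1⟩ := hq
  have hr'0 : ∀ x, 0 ≤ r' x := by
    intro x; rw [hr']; exact mul_nonneg (hp0 _) (hq0 _)
  have hperm : ∑ x, r' x = ∑ x : Fin m × Fin n, p x.1 * q x.2 := by
    rw [hr']
    exact Equiv.sum_comp σ (fun x => p x.1 * q x.2)
  have hprod : ∑ x : Fin m × Fin n, p x.1 * q x.2 = 1 := by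
    rw [Fintype.sum_prod_type]
    simp only [← Finset.mul_sum, hq1, mul_one, hp1]
  have hsum1 : ∑ x, r' x = 1 := hperm.trans hprod
  have hent : ∑ x, Real.negMulLog (r' x) = shannonEntropy p + shannonEntropy q := by
    rw [hr']
    rw [Equiv.sum_comp σ (fun x => Real.negMulLog (p x.1 * q x.2))]
    rw [Fintype.sum_prod_type]
    simp only [Real.negMulLog_mul]
    rw [Finset.sum_congr rfl (fun i _ => Finset.sum_add_distrib)]
    rw [Finset.sum_add_distrib]
    simp only [← Finset.mul_sum, ← Finset.sum_mul, hq1, hp1, shannonEntropy]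
    ring_nf
  calc shannonEntropy p + shannonEntropy q = ∑ x, Real.negMulLog (r' x) := hent.symm
    _ ≤ _ := subadditivity_aux r' hr'0 hsum1
end
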